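/- Let r₀ > 0, λ ∈ ℝ, and ν₁ ≠ ν₂ be real numbers. Let p : [0, r₀] → ℝ be continuous with p(0) = 0 and continuously differentiable on (0, r₀], and let q : (0, r₀) → ℝ be continuous. Let a, b : [0, r₀] → ℝ be continuously differentiable on [0, r₀] and twice differentiable on (0, r₀), with a(r₀) = b(r₀) = 0, satisfying (p a')'(t) + (λ − ν₁ q(t)) p(t) a(t) = 0 and (p b')'(t) + (λ − ν₂ q(t)) p(t) b(t) = 0 for all t ∈ (0, r₀). Assume t ↦ q(t) p(t) a(t) b(t) is integrable on (0, r₀). Then ∫₀^{r₀} q(t) p(t) a(t) b(t) dt = 0. -/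

import Mathlib

open Set MeasureTheory

/-- `L²_{pq}`-orthogonality of Sturm–Liouville solutions with the same
eigenvalue `λ` but distinct parameters `ν₁ ≠ ν₂`: if
`(p a')' + (λ - ν₁ q) p a = 0` and `(p b')' + (λ - ν₂ q) p b = 0` on
`(0, r₀)`, with `a(r₀) = b(r₀) = 0`, `p(0) = 0`, and `q p a b` integrable,
then `∫₀^{r₀} q p a b = 0`. -/
theorem stmt_10 (r₀ lam ν₁ ν₂ : ℝ) (hr : 0 < r₀) (hne : ν₁ ≠ ν₂)
    (p p' q a a' b b' : ℝ → ℝ)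
    (hpc : ContinuousOn p (Icc 0 r₀)) (hp0 : p 0 = 0)
    (hpd : ∀ t ∈ Ioc 0 r₀, HasDerivWithinAt p (p' t) (Icc 0 r₀) t)
    (hp'c : ContinuousOn p' (Ioc 0 r₀))
    (hq : ContinuousOn q (Ioo 0 r₀))
    (had : ∀ t ∈ Icc 0 r₀, HasDerivWithinAt a (a' t) (Icc 0 r₀) t)
    (ha'c : ContinuousOn a' (Icc 0 r₀))
    (hbd : ∀ t ∈ Icc 0 r₀, HasDerivWithinAt b (b' t) (Icc 0 r₀) t)
    (hb'c : ContinuousOn b' (Icc 0 r₀))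
    (har : a r₀ = 0) (hbr : b r₀ = 0)
    (heqa : ∀ t ∈ Ioo 0 r₀, HasDerivAt (fun s => p s * a' s)
      (-((lam - ν₁ * q t) * (p t * a t))) t)
    (heqb : ∀ t ∈ Ioo 0 r₀, HasDerivAt (fun s => p s * b' s)
      (-((lam - ν₂ * q t) * (p t * b t))) t)
    (hint : IntegrableOn (fun t => q t * p t * a t * b t) (Ioo 0 r₀)) :
    ∫ t in Ioo (0 : ℝ) r₀, q t * p t * a t * b t = 0 := by
  have hc : ν₁ - ν₂ ≠ 0 := sub_ne_zero.mpr hne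
  set W : ℝ → ℝ := fun s => p s * a' s * b s - p s * b' s * a s with hWdef
  have haC : ContinuousOn a (Icc 0 r₀) := fun t ht => (had t ht).continuousWithinAt
  have hbC : ContinuousOn b (Icc 0 r₀) := fun t ht => (hbd t ht).continuousWithinAt
  have hWc : ContinuousOn W (Icc 0 r₀) :=
    ((hpc.mul ha'c).mul hbC).sub ((hpc.mul hb'c).mul haC)
  have hderiv : ∀ t ∈ Ioo (0:ℝ) r₀,
      HasDerivAt W ((ν₁ - ν₂) * (q t * p t * a t * b t)) t := by
    intro t ht
    have htmem : Icc (0:ℝ) r₀ ∈ nhds t := Icc_mem_nhds ht.1 ht.2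
    have hat : HasDerivAt a (a' t) t :=
      (had t (Ioo_subset_Icc_self ht)).hasDerivAt htmem
    have hbt : HasDerivAt b (b' t) t :=
      (hbd t (Ioo_subset_Icc_self ht)).hasDerivAt htmem
    have h1 := ((heqa t ht).mul hbt).sub ((heqb t ht).mul hat)
    exact h1.congr_deriv (by ring)
  have hint2 : IntervalIntegrable (fun t => (ν₁ - ν₂) * (q t * p t * a t * b t))
      volume 0 r₀ := by
    rw [intervalIntegrable_iff_integrableOn_Ioo_of_le hr.le]
    exact hint.const_mul _
  have hftc := intervalIntegral.integral_eq_sub_of_hasDeriv_right_of_le hr.le hWc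
    (fun t ht => (hderiv t ht).hasDerivWithinAt) hint2
  have hW0 : W 0 = 0 := by simp [hWdef, hp0]
  have hWr : W r₀ = 0 := by simp [hWdef, har, hbr]
  rw [hW0, hWr, sub_zero] at hftc
  have h2 : ∫ t in Ioo (0:ℝ) r₀, (ν₁ - ν₂) * (q t * p t * a t * b t) = 0 := by
    rw [intervalIntegral.integral_of_le hr.le,
      MeasureTheory.integral_Ioc_eq_integral_Ioo] at hftc
    exact hftc
  rw [MeasureTheory.integral_const_mul] at h2
  exact (mul_eq_zero.mp h2).resolve_left hc
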